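/- The abelianization of the braided Ptolemy–Thompson group T* is cyclic of order 6, i.e. Abelianization(T*) ≅ ℤ/6ℤ. -/

import Mathlib

/-! The braided Ptolemy–Thompson group `T*` (presentation with generators α, β, σ),
the Ptolemy–Thompson group `T` (presentation with generators α, β), and the stable
braid group `B∞`. -/

-- Generators of T*: 0 ↦ α, 1 ↦ β, 2 ↦ σ
def TSα : FreeGroup (Fin 3) := FreeGroup.of 0
def TSβ : FreeGroup (Fin 3) := FreeGroup.of 1
def TSσ : FreeGroup (Fin 3) := FreeGroup.of 2
/-- a = α²σ⁻¹ -/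
def TSa : FreeGroup (Fin 3) := TSα^2 * TSσ⁻¹
def TSσ₁ : FreeGroup (Fin 3) := TSσ
def TSσ₂ : FreeGroup (Fin 3) := TSβ * TSσ * TSβ⁻¹
def TSσ₃ : FreeGroup (Fin 3) := TSβ⁻¹ * TSσ * TSβ

open scoped commutatorElement

/-- The fifteen defining relations of `T*`, written as relators. -/
def TstarRels : Set (FreeGroup (Fin 3)) :=
  { TSα * TSσ * (TSσ * TSα)⁻¹,                         -- (1) ασ = σα
    TSα^4 * (TSσ^2)⁻¹,                                  -- (2) α⁴ = σ²
    TSβ^3,                                              -- (3) β³ = 1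
    (TSβ*TSα)^5 * (TSσ*TSβ*TSσ*TSβ⁻¹*TSσ)⁻¹,            -- (4) (βα)⁵ = σβσβ⁻¹σ
    ⁅TSβ*TSα*TSβ, TSa*TSβ*TSα*TSβ*TSa⁆,                 -- (5)
    ⁅TSβ*TSα*TSβ, TSa*TSβ*TSa*TSβ*TSα*TSβ*TSa*TSβ*TSa⁆, -- (6)
    ⁅TSσ, TSβ*TSα*TSβ⁆,                                 -- (7)
    ⁅TSσ, TSβ*TSα*TSβ*TSa*TSβ⁻¹⁆,                       -- (8)
    ⁅TSσ, TSβ*TSa*TSβ⁻¹*TSa*TSβ*TSα*TSβ*TSa*TSβ*TSa*TSβ⁻¹⁆, -- (9)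
    ⁅TSσ, TSβ*TSa*TSβ*TSa*TSβ*TSα*TSβ*TSa*TSβ*TSa*TSβ⁆, -- (10)
    ⁅TSσ, TSβ*TSa*TSβ⁻¹*TSσ*(TSβ*TSa*TSβ⁻¹)⁻¹⁆,         -- (11)
    ⁅TSσ, TSβ*TSa*TSβ*TSa*TSβ⁻¹*TSσ*(TSβ*TSa*TSβ*TSa*TSβ⁻¹)⁻¹⁆, -- (12)
    ⁅TSσ, TSβ*TSa*TSβ*TSa*TSβ*TSσ*(TSβ*TSa*TSβ*TSa*TSβ)⁻¹⁆,     -- (13)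
    (TSσ₁*TSσ₂*TSσ₁) * (TSσ₂*TSσ₁*TSσ₂)⁻¹,              -- (14)
    (TSσ₁*TSσ₂*TSσ₃*TSσ₁) * (TSσ₂*TSσ₃*TSσ₁*TSσ₂)⁻¹,    -- (15a)
    (TSσ₂*TSσ₃*TSσ₁*TSσ₂) * (TSσ₃*TSσ₁*TSσ₂*TSσ₃)⁻¹ }   -- (15b)

/-- The braided Ptolemy–Thompson group `T*`. -/
abbrev Tstar := PresentedGroup TstarRels


namespace TstarAux

theorem auxAlg {G : Type*} [CommGroup G] {x y s : G} (h1 : x^4 = s^2) (h2 : y^3 = 1)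
    (h3 : y^5 * x^5 = s^3) : y = x^2 ∧ s = x^5 ∧ x^6 = 1 := by
  have hy : y * x^10 = x^12 := by
    have h : (y^5*x^5)^2 = (s^2)^3 := by
      rw [h3, ← pow_mul, ← pow_mul]
    rw [← h1, mul_pow, ← pow_mul, ← pow_mul, ← pow_mul] at h
    norm_num at h
    have hy10 : y^10 = y := by
      rw [show (10:ℕ)=3*3+1 by norm_num, pow_add, pow_mul, h2, one_pow, one_mul, pow_one]
    rw [hy10] at h; exact h
  have hyx2 : y = x^2 := by
    have h12 : x^12 = x^2 * x^10 := by rw [← pow_add]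
    rw [h12] at hy
    exact mul_right_cancel hy
  have hx6 : x^6 = 1 := by
    rw [show (6:ℕ)=2*3 by norm_num, pow_mul, ← hyx2, h2]
  have hs3 : s^3 = x^3 := by
    rw [← h3, hyx2, ← pow_mul, ← pow_add]
    norm_num
    rw [show (15:ℕ)=3+6*2 by norm_num, pow_add, pow_mul, hx6, one_pow, mul_one]
  have hs : s = x^5 := by
    have h : s^3 * (s^2)⁻¹ = x^3 * (x^4)⁻¹ := by rw [hs3, h1]
    have hl : s^3 * (s^2)⁻¹ = s := by group
    have hr2 : x^3 * (x^4)⁻¹ = x⁻¹ := by group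
    rw [hl, hr2] at h
    have h5 : x^5 * x = 1 := by rw [← pow_succ]; exact hx6
    rw [h, eq_comm]
    exact eq_inv_of_mul_eq_one_left h5
  exact ⟨hyx2, hs, hx6⟩

def φ0 : Fin 3 → Multiplicative (ZMod 6) :=
  ![Multiplicative.ofAdd 1, Multiplicative.ofAdd 2, Multiplicative.ofAdd 5]

theorem hφ0 : ∀ r ∈ TstarRels, FreeGroup.lift φ0 r = 1 := by
  intro r hr
  simp only [TstarRels, Set.mem_insert_iff, Set.mem_singleton_iff] at hr
  rcases hr with rfl|rfl|rfl|rfl|rfl|rfl|rfl|rfl|rfl|rfl|rfl|rfl|rfl|rfl|rfl|rfl <;>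
    simp only [TSa, TSα, TSβ, TSσ, TSσ₁, TSσ₂, TSσ₃, commutatorElement_def,
      map_mul, map_inv, map_pow, FreeGroup.lift_apply_of] <;> decide

/-- The composite `FreeGroup (Fin 3) →* Abelianization Tstar`. -/
def fAb : FreeGroup (Fin 3) →* Abelianization Tstar :=
  (Abelianization.of).comp (PresentedGroup.mk TstarRels)

theorem fAb_rel : ∀ r ∈ TstarRels, fAb r = 1 := by
  intro r hr
  have : PresentedGroup.mk TstarRels r = 1 :=
    (QuotientGroup.eq_one_iff r).mpr (Subgroup.subset_normalClosure hr)
  show Abelianization.of (PresentedGroup.mk TstarRels r) = 1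
  rw [this, map_one]

theorem key : fAb TSβ = (fAb TSα)^2 ∧ fAb TSσ = (fAb TSα)^5 ∧ (fAb TSα)^6 = 1 := by
  have h1 : (fAb TSα)^4 = (fAb TSσ)^2 := by
    have := fAb_rel (TSα^4 * (TSσ^2)⁻¹) (by simp [TstarRels])
    rw [map_mul, map_inv, map_pow, map_pow, mul_inv_eq_one] at this
    exact this
  have h2 : (fAb TSβ)^3 = 1 := by
    have := fAb_rel (TSβ^3) (by simp [TstarRels])
    rwa [map_pow] at this
  have h3 : (fAb TSβ)^5 * (fAb TSα)^5 = (fAb TSσ)^3 := by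
    have := fAb_rel ((TSβ*TSα)^5 * (TSσ*TSβ*TSσ*TSβ⁻¹*TSσ)⁻¹) (by simp [TstarRels])
    rw [map_mul, map_inv, map_pow, map_mul, mul_inv_eq_one] at this
    simp only [map_mul, map_inv] at this
    set x := fAb TSα; set y := fAb TSβ; set s := fAb TSσ
    calc y^5 * x^5 = (y*x)^5 := (mul_pow y x 5).symm
      _ = s*y*s*y⁻¹*s := this
      _ = (y*y⁻¹)*(s*(s*s)) := by ac_rfl
      _ = s^3 := by simp [pow_succ, mul_assoc]
  exact auxAlg h1 h2 h3

end TstarAux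


open TstarAux

/-- The abelianization of the braided Ptolemy–Thompson group `T*`
is cyclic of order 6. -/
theorem abelianization_Tstar_iso_zmod6 :
    Nonempty (Abelianization Tstar ≃* Multiplicative (ZMod 6)) := by
  obtain ⟨hβ, hσ, hx6⟩ := key
  set x : Abelianization Tstar := fAb TSα with hxdef
  -- forward hom
  let φ : Tstar →* Multiplicative (ZMod 6) := PresentedGroup.toGroup hφ0
  let φ' : Abelianization Tstar →* Multiplicative (ZMod 6) := Abelianization.lift φ
  -- backward hom
  have hx6' : zmultiplesHom (Additive (Abelianization Tstar)) (Additive.ofMul x) (6:ℤ) = 0 := by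
    show (6:ℤ) • Additive.ofMul x = 0
    rw [← ofMul_zpow]
    norm_num
    exact hx6
  let F : ZMod 6 →+ Additive (Abelianization Tstar) :=
    ZMod.lift 6 ⟨zmultiplesHom (Additive (Abelianization Tstar)) (Additive.ofMul x), hx6'⟩
  let ψ : Multiplicative (ZMod 6) →* Abelianization Tstar := AddMonoidHom.toMultiplicativeLeft F
  have hψ : ∀ m : ℤ, ψ (Multiplicative.ofAdd ((m : ZMod 6))) = x ^ m := by
    intro m
    show Additive.toMul (F ((m:ℤ) : ZMod 6)) = x ^ m
    rw [show F ((m:ℤ) : ZMod 6) = (m:ℤ) • Additive.ofMul x from ZMod.lift_coe _ _ m]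
    rw [toMul_zsmul]
    rfl
  have hφ'x : φ' x = Multiplicative.ofAdd (1 : ZMod 6) := by
    show φ (PresentedGroup.mk TstarRels TSα) = _
    have : φ (PresentedGroup.mk TstarRels TSα) = FreeGroup.lift φ0 TSα := rfl
    rw [this, TSα, FreeGroup.lift_apply_of]
    rfl
  have h1comp : ψ.comp φ' = MonoidHom.id (Abelianization Tstar) := by
    refine Abelianization.hom_ext _ _ ?_
    refine PresentedGroup.ext fun i => ?_
    have hval : ∀ j : Fin 3, φ' (Abelianization.of (PresentedGroup.of j)) = φ0 j := by
      intro j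
      show φ (PresentedGroup.of j) = φ0 j
      exact PresentedGroup.toGroup.of hφ0
    simp only [MonoidHom.comp_apply, MonoidHom.id_apply]
    rw [hval i]
    fin_cases i
    · show ψ (Multiplicative.ofAdd (1 : ZMod 6)) = x
      have := hψ 1; norm_num at this; exact this
    · show ψ (Multiplicative.ofAdd (2 : ZMod 6)) = fAb TSβ
      have := hψ 2; norm_num at this; exact this.trans hβ.symm
    · show ψ (Multiplicative.ofAdd (5 : ZMod 6)) = fAb TSσ
      have := hψ 5; norm_num at this; exact this.trans hσ.symm
  have h2comp : φ'.comp ψ = MonoidHom.id (Multiplicative (ZMod 6)) := by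
    apply DFunLike.ext
    intro z
    obtain ⟨m, hm⟩ := ZMod.intCast_surjective (Multiplicative.toAdd z)
    have hz : z = Multiplicative.ofAdd ((m : ZMod 6)) := by rw [hm]; simp
    rw [hz]
    simp only [MonoidHom.comp_apply, MonoidHom.id_apply]
    rw [hψ m, map_zpow, hφ'x]
    rw [← ofAdd_zsmul]
    congr 1
    rw [zsmul_eq_mul, mul_one]
  exact ⟨MonoidHom.toMulEquiv φ' ψ h1comp h2comp⟩
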